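/- For L ≥ 22 and N ≥ 21, the number of partitions of N with smallest part 3, all parts at most L+3, and no part equal to L is strictly greater than the number of nonempty partitions of N with all parts in {4, 5, …, L+3}. -/

import Mathlib

namespace Stmt16
open Multiset

def rhoV (V : ℕ) : ℕ := if V % 3 = 1 then 4 else if V % 3 = 2 then 5 else 6
def yV (V : ℕ) : ℕ := (V - 3 - rhoV V) / 3
def rhoU (L : ℕ) : ℕ := if L % 3 = 1 then 8 else if L % 3 = 2 then 9 else 10
def yU (L : ℕ) : ℕ := (L - 2 - rhoU L) / 3

lemma rhoV_ge (V : ℕ) : 4 ≤ rhoV V ∧ rhoV V ≤ 6 := by unfold rhoV; split_ifs <;> omega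
lemma rhoV_spec (V : ℕ) (h : 22 ≤ V) : 3 * yV V + 3 + rhoV V = V := by
  unfold yV rhoV; split_ifs <;> omega
lemma yV_ge (V : ℕ) (h : 22 ≤ V) : 5 ≤ yV V := by
  unfold yV rhoV; split_ifs <;> omega
lemma rhoU_ge (L : ℕ) : 8 ≤ rhoU L ∧ rhoU L ≤ 10 := by unfold rhoU; split_ifs <;> omega
lemma rhoU_spec (L : ℕ) (h : 22 ≤ L) : 3 * yU L + 3 + rhoU L = L + 1 := by
  unfold yU rhoU; split_ifs <;> omega
lemma yU_ge (L : ℕ) (h : 22 ≤ L) : 4 ≤ yU L := by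
  unfold yU rhoU; split_ifs <;> omega

lemma sort_coe_of_sorted (l : List ℕ) (h : List.Pairwise (· ≤ ·) l) :
    (l : Multiset ℕ).sort (· ≤ ·) = l := by
  refine List.Perm.eq_of_pairwise' (Multiset.pairwise_sort _ _) h ?_
  exact Quotient.exact (Multiset.sort_eq (l : Multiset ℕ) (· ≤ ·))

lemma erase_add_singleton (Q : Multiset ℕ) (ρ : ℕ) : (Q + {ρ}).erase ρ = Q := by
  have h : Q + {ρ} = ρ ::ₘ Q := by
    rw [add_comm, Multiset.singleton_add]
  rw [h, Multiset.erase_cons_head]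

lemma count3_shape (Q : Multiset ℕ) (y ρ : ℕ) (hQ : 3 ∉ Q) (hρ : ρ ≠ 3) :
    (Q + replicate y 3 + {ρ}).count 3 = y := by
  rw [Multiset.count_add, Multiset.count_add, Multiset.count_replicate]
  simp [Multiset.count_eq_zero.2 hQ, Multiset.count_singleton, Ne.symm hρ]

lemma filter3_shape (Q : Multiset ℕ) (y ρ : ℕ) (hQ : 3 ∉ Q) (hρ : ρ ≠ 3) :
    (Q + replicate y 3 + {ρ}).filter (· ≠ 3) = Q + {ρ} := by
  ext a
  rw [Multiset.count_filter]
  by_cases ha : a = 3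
  · subst ha
    simp only [ne_eq, not_true_eq_false, if_false]
    rw [Multiset.count_add, Multiset.count_eq_zero.2 hQ, Multiset.count_singleton]
    simp [Ne.symm hρ]
  · simp only [ne_eq, ha, not_false_eq_true, if_true]
    rw [Multiset.count_add, Multiset.count_add, Multiset.count_add,
        Multiset.count_replicate]
    simp [Ne.symm ha]

lemma mod_helper (t L r : ℕ) (ht : 1 ≤ t) (hr1 : 1 ≤ r) (hr2 : r < L) :
    (t * L - r) % L ≠ 0 := by
  have h1 : t * L - r = (L - r) + (t-1) * L := by
    have h2 : t * L = (t-1) * L + L := by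
      cases t with
      | zero => omega
      | succ n => simp [Nat.succ_sub_one, Nat.succ_mul]
    omega
  rw [h1, Nat.add_mul_mod_self_right]
  have : (L - r) % L = L - r := Nat.mod_eq_of_lt (by omega)
  omega


def dec3 : List ℕ → List ℕ
  | a :: b :: c :: r => (a-1) :: (b-1) :: (c-1) :: r
  | l => l

def inc3 : List ℕ → List ℕ
  | a :: b :: c :: r => (a+1) :: (b+1) :: (c+1) :: r
  | l => l

def small (L : ℕ) : List ℕ → Multiset ℕ
  | [z] => if z = L+3 then replicate 4 3 + {L-12} else {z-3}
  | [x, y] =>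
      if x = L+3 then replicate 5 3 + {L-6, L-6}
      else if 6 ≤ x then {x-3, y}
      else if x = 4 then
        (if y % 2 = 0 then {3, 4, (y-6)/2, (y-6)/2} else {3, 5, (y-7)/2, (y-7)/2})
      else
        (if y % 2 = 0 then {4, 4, (y-6)/2, (y-6)/2} else {4, 5, (y-7)/2, (y-7)/2})
  | _ => 0

def body (L : ℕ) (P : Multiset ℕ) : Multiset ℕ :=
  if 1 ≤ P.count L then
    (P.filter (· ≠ L)) + replicate (yV (P.count L * L)) 3 + {rhoV (P.count L * L)}
  else if L+1 ∈ P then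
    (P.erase (L+1)) + replicate (yU L) 3 + {rhoU L}
  else if 3 ≤ Multiset.card P then (dec3 (P.sort (· ≤ ·)) : List ℕ)
  else small L (P.sort (· ≤ ·))

def F (L : ℕ) (P : Multiset ℕ) : Multiset ℕ := 3 ::ₘ body L P

def decB : List ℕ → Multiset ℕ
  | [a] => {a+3}
  | [a, b] => if a = 3 then {6, b} else {a+3, b}
  | [a, b, c, d] =>
      if c = d then
        if a = 3 ∧ b = 4 then {4, 2*c+6}
        else if a = 3 ∧ b = 5 then {4, 2*c+7}
        else if a = 4 ∧ b = 4 then {5, 2*c+6}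
        else if a = 4 ∧ b = 5 then {5, 2*c+7}
        else (inc3 [a,b,c,d] : List ℕ)
      else (inc3 [a,b,c,d] : List ℕ)
  | l => (inc3 l : List ℕ)

def Gk (μ : Multiset ℕ) : ℕ := (μ.erase 3).count 3
def GM (μ : Multiset ℕ) : Multiset ℕ := (μ.erase 3).filter (· ≠ 3)

def G (L : ℕ) (μ : Multiset ℕ) : Multiset ℕ :=
  if 4 ≤ Gk μ then
    if 8 ∈ GM μ ∧ 3*(Gk μ)+11 = L+1 then ((GM μ).erase 8) + {L+1}
    else if 9 ∈ GM μ ∧ 3*(Gk μ)+12 = L+1 then ((GM μ).erase 9) + {L+1}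
    else if 10 ∈ GM μ ∧ 3*(Gk μ)+13 = L+1 then ((GM μ).erase 10) + {L+1}
    else if 4 ∈ GM μ ∧ (3*(Gk μ)+7) % L = 0 ∧ L ≤ 3*(Gk μ)+7 then
      ((GM μ).erase 4) + replicate ((3*(Gk μ)+7)/L) L
    else if 5 ∈ GM μ ∧ (3*(Gk μ)+8) % L = 0 ∧ L ≤ 3*(Gk μ)+8 then
      ((GM μ).erase 5) + replicate ((3*(Gk μ)+8)/L) L
    else if 6 ∈ GM μ ∧ (3*(Gk μ)+9) % L = 0 ∧ L ≤ 3*(Gk μ)+9 then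
      ((GM μ).erase 6) + replicate ((3*(Gk μ)+9)/L) L
    else if Gk μ = 4 ∧ GM μ = {L-12} then {L+3}
    else {L+3, L+3}
  else decB ((μ.erase 3).sort (· ≤ ·))

def Ex (L N : ℕ) : Multiset ℕ :=
  if N % 3 = 0 then replicate (N/3) 3
  else if N % 3 = 1 then
    (if N = L+1 then replicate ((N-4)/3) 3 + {4} else replicate ((N-7)/3) 3 + {7})
  else
    (if N = L+1 then replicate ((N-8)/3) 3 + {4, 4} else replicate ((N-8)/3) 3 + {8})

def ValidA (L N : ℕ) (P : Multiset ℕ) : Prop :=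
  P.sum = N ∧ (∀ j ∈ P, 4 ≤ j ∧ j ≤ L+3) ∧ P ≠ 0

lemma erase3_F (L : ℕ) (P : Multiset ℕ) : (F L P).erase 3 = body L P := by
  rw [F, Multiset.erase_cons_head]


lemma filter_ne_add_replicate (P : Multiset ℕ) (L : ℕ) :
    P.filter (· ≠ L) + replicate (P.count L) L = P := by
  have h1 := Multiset.filter_add_not (fun x => x ≠ L) P
  have h2 : P.filter (fun a => ¬ a ≠ L) = replicate (P.count L) L := by
    have he : P.filter (fun a => ¬ a ≠ L) = P.filter (fun a => a = L) := by
      apply Multiset.filter_congr; intro a _; simp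
    rw [he, Multiset.filter_eq']
  rw [← h2]; exact h1

lemma GF_t {L : ℕ} (hL : 22 ≤ L) (P : Multiset ℕ) (hP : ∀ j ∈ P, 4 ≤ j ∧ j ≤ L+3)
    (h1 : 1 ≤ P.count L) : G L (F L P) = P := by
  set t := P.count L with ht
  set V := t * L with hV
  have hVL : V = t * L := hV
  have htL : L ≤ V := by
    have h := Nat.mul_le_mul_right L h1
    rw [one_mul] at h; rw [hVL]; exact h
  have hV22 : 22 ≤ V := le_trans hL htL
  have hcase : V = L ∨ 2 * L ≤ V := by
    rcases Nat.lt_or_ge t 2 with h | h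
    · left; have : t = 1 := by omega
      rw [hVL, this, one_mul]
    · right; rw [hVL]; exact Nat.mul_le_mul_right L h
  set ρ := rhoV V with hρdef
  set y := yV V with hydef
  have hspec : 3*y + 3 + ρ = V := rhoV_spec V hV22
  have hρ : 4 ≤ ρ ∧ ρ ≤ 6 := rhoV_ge V
  have hy : 5 ≤ y := yV_ge V hV22
  set Q := P.filter (· ≠ L) with hQdef
  have hQ3 : 3 ∉ Q := by
    intro hm
    have := (hP 3 (Multiset.mem_filter.1 hm).1).1; omega
  have hbody : body L P = Q + replicate y 3 + {ρ} := by
    rw [body, if_pos h1]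
  have hk : Gk (F L P) = y := by
    rw [Gk, erase3_F, hbody]; exact count3_shape Q y ρ hQ3 (by omega)
  have hM : GM (F L P) = Q + {ρ} := by
    rw [GM, erase3_F, hbody]; exact filter3_shape Q y ρ hQ3 (by omega)
  have hsplit : Q + replicate t L = P := by rw [hQdef, ht]; exact filter_ne_add_replicate P L
  have hLpos : 0 < L := by omega
  rw [G, hk, hM, if_pos (by omega : 4 ≤ y)]
  -- u-tests fail
  rw [if_neg (by rintro ⟨-, h⟩; rcases hcase with hc | hc <;> omega)]
  rw [if_neg (by rintro ⟨-, h⟩; rcases hcase with hc | hc <;> omega)]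
  rw [if_neg (by rintro ⟨-, h⟩; rcases hcase with hc | hc <;> omega)]
  -- t-tests: split on ρ
  have hmem : ρ ∈ Q + {ρ} := Multiset.mem_add.2 (Or.inr (Multiset.mem_singleton_self ρ))
  rcases (by omega : ρ = 4 ∨ ρ = 5 ∨ ρ = 6) with h4 | h5 | h6
  · have hval : 3*y+7 = V := by omega
    rw [if_pos ⟨by rw [← h4]; exact hmem,
        by rw [hval, hVL]; exact Nat.mul_mod_left t L, by omega⟩]
    rw [hval, hVL, Nat.mul_div_cancel t hLpos, ← h4, erase_add_singleton]
    exact hsplit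
  · rw [if_neg (by
      rintro ⟨-, hmod, -⟩
      have hval : 3*y+7 = t*L - 1 := by omega
      exact mod_helper t L 1 h1 (by omega) (by omega) (by rw [← hval]; exact hmod))]
    have hval : 3*y+8 = V := by omega
    rw [if_pos ⟨by rw [← h5]; exact hmem,
        by rw [hval, hVL]; exact Nat.mul_mod_left t L, by omega⟩]
    rw [hval, hVL, Nat.mul_div_cancel t hLpos, ← h5, erase_add_singleton]
    exact hsplit
  · rw [if_neg (by
      rintro ⟨-, hmod, -⟩
      have hval : 3*y+7 = t*L - 2 := by omega
      exact mod_helper t L 2 h1 (by omega) (by omega) (by rw [← hval]; exact hmod))]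
    rw [if_neg (by
      rintro ⟨-, hmod, -⟩
      have hval : 3*y+8 = t*L - 1 := by omega
      exact mod_helper t L 1 h1 (by omega) (by omega) (by rw [← hval]; exact hmod))]
    have hval : 3*y+9 = V := by omega
    rw [if_pos ⟨by rw [← h6]; exact hmem,
        by rw [hval, hVL]; exact Nat.mul_mod_left t L, by omega⟩]
    rw [hval, hVL, Nat.mul_div_cancel t hLpos, ← h6, erase_add_singleton]
    exact hsplit


lemma GF_u {L : ℕ} (hL : 22 ≤ L) (P : Multiset ℕ) (hP : ∀ j ∈ P, 4 ≤ j ∧ j ≤ L+3)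
    (h0 : ¬ 1 ≤ P.count L) (h2 : L+1 ∈ P) : G L (F L P) = P := by
  set ρ := rhoU L with hρdef
  set y := yU L with hydef
  have hspec : 3*y + 3 + ρ = L + 1 := rhoU_spec L hL
  have hρ : 8 ≤ ρ ∧ ρ ≤ 10 := rhoU_ge L
  have hy : 4 ≤ y := yU_ge L hL
  set Q := P.erase (L+1) with hQdef
  have hQ3 : 3 ∉ Q := by
    intro hm
    have := (hP 3 (Multiset.mem_of_mem_erase hm)).1; omega
  have hbody : body L P = Q + replicate y 3 + {ρ} := by
    rw [body, if_neg h0, if_pos h2]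
  have hk : Gk (F L P) = y := by
    rw [Gk, erase3_F, hbody]; exact count3_shape Q y ρ hQ3 (by omega)
  have hM : GM (F L P) = Q + {ρ} := by
    rw [GM, erase3_F, hbody]; exact filter3_shape Q y ρ hQ3 (by omega)
  have hsplit : Q + {L+1} = P := by
    have h := Multiset.cons_erase h2
    rw [add_comm, Multiset.singleton_add, hQdef]; exact h
  have hmem : ρ ∈ Q + {ρ} := Multiset.mem_add.2 (Or.inr (Multiset.mem_singleton_self ρ))
  rw [G, hk, hM, if_pos (by omega : 4 ≤ y)]
  rcases (by omega : ρ = 8 ∨ ρ = 9 ∨ ρ = 10) with h8 | h9 | h10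
  · rw [if_pos ⟨by rw [← h8]; exact hmem, by omega⟩, ← h8, erase_add_singleton]
    exact hsplit
  · rw [if_neg (by rintro ⟨-, h⟩; omega)]
    rw [if_pos ⟨by rw [← h9]; exact hmem, by omega⟩, ← h9, erase_add_singleton]
    exact hsplit
  · rw [if_neg (by rintro ⟨-, h⟩; omega)]
    rw [if_neg (by rintro ⟨-, h⟩; omega)]
    rw [if_pos ⟨by rw [← h10]; exact hmem, by omega⟩, ← h10, erase_add_singleton]
    exact hsplit


lemma inc3_dec3 (l : List ℕ) (h : ∀ x ∈ l, 4 ≤ x) : inc3 (dec3 l) = l := by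
  match l with
  | [] => rfl
  | [a] => rfl
  | [a, b] => rfl
  | a :: b :: c :: r =>
    have ha : 4 ≤ a := h a (by simp)
    have hb : 4 ≤ b := h b (by simp)
    have hc : 4 ≤ c := h c (by simp)
    show ((a-1+1) :: (b-1+1) :: (c-1+1) :: r) = _
    congr 1; · omega
    congr 1; · omega
    congr 1; · omega

lemma dec3_sorted (a b c : ℕ) (r : List ℕ) (h : List.Pairwise (· ≤ ·) (a :: b :: c :: r)) :
    List.Pairwise (· ≤ ·) ((a-1) :: (b-1) :: (c-1) :: r) := by
  rw [List.pairwise_cons] at h; obtain ⟨h1, h⟩ := h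
  rw [List.pairwise_cons] at h; obtain ⟨h2, h⟩ := h
  rw [List.pairwise_cons] at h; obtain ⟨h3, h4⟩ := h
  have hab : a ≤ b := h1 b (by simp)
  have hbc : b ≤ c := h2 c (by simp)
  rw [List.pairwise_cons]
  refine ⟨?_, ?_⟩
  · intro x hx
    rcases List.mem_cons.1 hx with he | hx
    · omega
    rcases List.mem_cons.1 hx with he | hx
    · omega
    · have := h3 x hx; omega
  rw [List.pairwise_cons]
  refine ⟨?_, ?_⟩
  · intro x hx
    rcases List.mem_cons.1 hx with he | hx
    · omega
    · have := h3 x hx; omega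
  rw [List.pairwise_cons]
  exact ⟨fun x hx => le_trans (by omega) (h3 x hx), h4⟩

lemma GF_I {L : ℕ} (hL : 22 ≤ L) (P : Multiset ℕ) (hP : ∀ j ∈ P, 4 ≤ j ∧ j ≤ L+3)
    (h0 : ¬ 1 ≤ P.count L) (h2 : L+1 ∉ P) (h3 : 3 ≤ Multiset.card P) : G L (F L P) = P := by
  have hcoe : ((P.sort (· ≤ ·) : List ℕ) : Multiset ℕ) = P := Multiset.sort_eq _ _
  have hsorted : List.Pairwise (· ≤ ·) (P.sort (· ≤ ·)) := Multiset.pairwise_sort _ _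
  have hlen : (P.sort (· ≤ ·)).length = Multiset.card P := Multiset.length_sort _
  have h4 : ∀ x ∈ (P.sort (· ≤ ·)), 4 ≤ x := by
    intro x hx
    exact (hP x (by rw [← hcoe]; exact_mod_cast hx)).1
  have hbody : body L P = ((dec3 (P.sort (· ≤ ·)) : List ℕ) : Multiset ℕ) := by
    rw [body, if_neg h0, if_neg h2, if_pos h3]
  rcases hℓ : P.sort (· ≤ ·) with - | ⟨a, l1⟩
  · rw [hℓ] at hlen; simp at hlen; omega
  rcases l1 with - | ⟨b, l2⟩
  · rw [hℓ] at hlen; simp at hlen; omega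
  rcases l2 with - | ⟨c, r⟩
  · rw [hℓ] at hlen; simp at hlen; omega
  rw [hℓ] at hcoe hsorted h4 hbody
  have ha4 : 4 ≤ a := h4 a (by simp)
  have hb4 : 4 ≤ b := h4 b (by simp)
  have hc4 : 4 ≤ c := h4 c (by simp)
  have hr4 : ∀ x ∈ r, 4 ≤ x := fun x hx => h4 x (by simp [hx])
  have hdec : dec3 (a :: b :: c :: r) = (a-1) :: (b-1) :: (c-1) :: r := rfl
  rw [hdec] at hbody
  have hdsort : List.Pairwise (· ≤ ·) ((a-1) :: (b-1) :: (c-1) :: r) :=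
    dec3_sorted a b c r hsorted
  -- count of 3 is at most 3
  have hr3 : r.count 3 = 0 := by
    rw [List.count_eq_zero]
    intro hm; have := hr4 3 hm; omega
  have hk3 : Gk (F L P) ≤ 3 := by
    rw [Gk, erase3_F, hbody]
    rw [Multiset.coe_count]
    simp only [List.count_cons, hr3]
    split_ifs <;> omega
  rw [G, if_neg (by omega)]
  rw [erase3_F, hbody, sort_coe_of_sorted _ hdsort]
  -- now decB on the explicit list
  have hsc : c ≤ List.headD r (c+1) ∨ r = [] := by
    rcases r with - | ⟨d, r'⟩
    · right; rfl
    · left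
      rw [List.pairwise_cons, List.pairwise_cons, List.pairwise_cons] at hsorted
      exact hsorted.2.2.1 d (by simp)
  have hinc : inc3 ((a-1) :: (b-1) :: (c-1) :: r) = a :: b :: c :: r := by
    have := inc3_dec3 (a :: b :: c :: r) h4
    rw [hdec] at this; exact this
  rcases r with - | ⟨d, r'⟩
  · have hd : decB [a-1, b-1, c-1] = ((inc3 [a-1, b-1, c-1] : List ℕ) : Multiset ℕ) := rfl
    rw [hd, hinc]; exact hcoe
  rcases r' with - | ⟨e, r''⟩
  · -- length 4 case
    have hcd : c ≤ d := by
      rw [List.pairwise_cons, List.pairwise_cons, List.pairwise_cons] at hsorted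
      exact hsorted.2.2.1 d (by simp)
    have hd : decB [a-1, b-1, c-1, d] =
        (if c-1 = d then
          if a-1 = 3 ∧ b-1 = 4 then ({4, 2*(c-1)+6} : Multiset ℕ)
          else if a-1 = 3 ∧ b-1 = 5 then {4, 2*(c-1)+7}
          else if a-1 = 4 ∧ b-1 = 4 then {5, 2*(c-1)+6}
          else if a-1 = 4 ∧ b-1 = 5 then {5, 2*(c-1)+7}
          else ((inc3 [a-1,b-1,c-1,d] : List ℕ) : Multiset ℕ)
        else ((inc3 [a-1,b-1,c-1,d] : List ℕ) : Multiset ℕ)) := rfl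
    rw [hd, if_neg (by omega), hinc]
    exact hcoe
  · have hd : decB ((a-1) :: (b-1) :: (c-1) :: d :: e :: r'') =
        ((inc3 ((a-1) :: (b-1) :: (c-1) :: d :: e :: r'') : List ℕ) : Multiset ℕ) := rfl
    rw [hd, hinc]
    exact hcoe


lemma coe_single (a : ℕ) : (([a] : List ℕ) : Multiset ℕ) = {a} := rfl
lemma coe_pair (a b : ℕ) : (([a,b] : List ℕ) : Multiset ℕ) = {a, b} := rfl
lemma coe_quad (a b c d : ℕ) : (([a,b,c,d] : List ℕ) : Multiset ℕ) = {a,b,c,d} := rfl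

lemma count3_shape2 (W : Multiset ℕ) (y : ℕ) (hW : 3 ∉ W) :
    (replicate y 3 + W).count 3 = y := by
  rw [Multiset.count_add, Multiset.count_replicate, Multiset.count_eq_zero.2 hW]
  simp

lemma filter3_shape2 (W : Multiset ℕ) (y : ℕ) (hW : 3 ∉ W) :
    (replicate y 3 + W).filter (· ≠ 3) = W := by
  ext a
  rw [Multiset.count_filter]
  by_cases ha : a = 3
  · subst ha
    simp only [ne_eq, not_true_eq_false, if_false]
    rw [Multiset.count_eq_zero.2 hW]
  · simp only [ne_eq, ha, not_false_eq_true, if_true]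
    rw [Multiset.count_add, Multiset.count_replicate, if_neg (Ne.symm ha)]
    simp

lemma mem_pair {x a b : ℕ} (h : x ∈ ({a, b} : Multiset ℕ)) : x = a ∨ x = b := by
  rcases Multiset.mem_cons.1 h with h | h
  · exact Or.inl h
  · exact Or.inr (Multiset.mem_singleton.1 h)

lemma GF_s {L N : ℕ} (hL : 22 ≤ L) (hN : 21 ≤ N) (P : Multiset ℕ)
    (hsum : P.sum = N) (hP : ∀ j ∈ P, 4 ≤ j ∧ j ≤ L+3)
    (h0 : ¬ 1 ≤ P.count L) (h2 : L+1 ∉ P) (h3 : ¬ 3 ≤ Multiset.card P) (hne : P ≠ 0) :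
    G L (F L P) = P := by
  have hcoe : ((P.sort (· ≤ ·) : List ℕ) : Multiset ℕ) = P := Multiset.sort_eq _ _
  have hsorted : List.Pairwise (· ≤ ·) (P.sort (· ≤ ·)) := Multiset.pairwise_sort _ _
  have hlen : (P.sort (· ≤ ·)).length = Multiset.card P := Multiset.length_sort _
  have hcard1 : 1 ≤ Multiset.card P := by
    rcases Nat.eq_zero_or_pos (Multiset.card P) with h | h
    · exact absurd (Multiset.card_eq_zero.1 h) hne
    · omega
  rcases hℓ : P.sort (· ≤ ·) with - | ⟨x, l1⟩
  · rw [hℓ] at hlen; simp at hlen; omega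
  rcases l1 with - | ⟨y, l2⟩
  · -- card 1 : P = {x}, x = N
    rw [hℓ] at hcoe
    rw [coe_single] at hcoe
    have hxN : x = N := by
      rw [← hsum, ← hcoe]; simp
    have hx : 4 ≤ x ∧ x ≤ L + 3 := hP x (by rw [← hcoe]; simp)
    have hxL : x ≠ L := by
      intro h; apply h0
      refine Multiset.one_le_count_iff_mem.2 ?_
      rw [← hcoe, h]
      exact Multiset.mem_singleton_self _
    have hxL1 : x ≠ L + 1 := by
      intro h; apply h2; rw [← hcoe, ← h]; simp
    have hbody : body L P = small L [x] := by
      rw [body, if_neg h0, if_neg h2, if_neg h3, hℓ]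
    by_cases hx3 : x = L + 3
    · have hsm : small L [x] = replicate 4 3 + {L-12} := by
        rw [small, if_pos hx3]
      have hW : (3:ℕ) ∉ ({L-12} : Multiset ℕ) := by
        rw [Multiset.mem_singleton]; omega
      have hk : Gk (F L P) = 4 := by
        rw [Gk, erase3_F, hbody, hsm]; exact count3_shape2 _ 4 hW
      have hM : GM (F L P) = {L-12} := by
        rw [GM, erase3_F, hbody, hsm]; exact filter3_shape2 _ 4 hW
      rw [G, hk, hM, if_pos (by omega)]
      rw [if_neg (by rintro ⟨hm, -⟩; rw [Multiset.mem_singleton] at hm; omega)]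
      rw [if_neg (by rintro ⟨hm, -⟩; rw [Multiset.mem_singleton] at hm; omega)]
      rw [if_neg (by rintro ⟨hm, hv⟩; rw [Multiset.mem_singleton] at hm; omega)]
      rw [if_neg (by rintro ⟨hm, -⟩; rw [Multiset.mem_singleton] at hm; omega)]
      rw [if_neg (by rintro ⟨hm, -⟩; rw [Multiset.mem_singleton] at hm; omega)]
      rw [if_neg (by rintro ⟨hm, -⟩; rw [Multiset.mem_singleton] at hm; omega)]
      rw [if_pos ⟨rfl, rfl⟩, ← hcoe, hx3]
    · have hsm : small L [x] = {x - 3} := by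
        rw [small, if_neg hx3]
      have hk : Gk (F L P) = 0 := by
        rw [Gk, erase3_F, hbody, hsm, Multiset.count_singleton, if_neg]
        omega
      rw [G, hk, if_neg (by omega), erase3_F, hbody, hsm]
      have hs : ({x - 3} : Multiset ℕ).sort (· ≤ ·) = [x-3] := by
        rw [← coe_single]
        exact sort_coe_of_sorted _ (by simp)
      rw [hs]
      have hd : decB [x-3] = {x-3+3} := rfl
      rw [hd, ← hcoe]
      have : x - 3 + 3 = x := by omega
      rw [this]
  rcases l2 with - | ⟨w, l3⟩
  swap
  · rw [hℓ] at hlen; simp at hlen; omega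
  -- card 2 : P = {x, y}
  rw [hℓ] at hcoe hsorted
  rw [coe_pair] at hcoe
  have hxy : x ≤ y := by
    rw [List.pairwise_cons] at hsorted
    exact hsorted.1 y (by simp)
  have hx : 4 ≤ x ∧ x ≤ L + 3 := hP x (by rw [← hcoe]; simp)
  have hy : 4 ≤ y ∧ y ≤ L + 3 := hP y (by rw [← hcoe]; simp)
  have hsum2 : x + y = N := by
    rw [← hsum, ← hcoe]; simp
  have hyL : y ≠ L := by
    intro h; apply h0
    refine Multiset.one_le_count_iff_mem.2 ?_
    rw [← hcoe, h]
    exact Multiset.mem_cons.2 (Or.inr (Multiset.mem_singleton_self _))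
  have hyL1 : y ≠ L + 1 := by
    intro h; apply h2; rw [← hcoe, ← h]; simp
  have hbody : body L P = small L [x, y] := by
    rw [body, if_neg h0, if_neg h2, if_neg h3, hℓ]
  by_cases hx3 : x = L + 3
  · -- dd case
    have hyv : y = L + 3 := by omega
    have hsm : small L [x, y] = replicate 5 3 + {L-6, L-6} := by
      rw [small, if_pos hx3]
    have hW : (3:ℕ) ∉ ({L-6, L-6} : Multiset ℕ) := by
      intro hm; rcases mem_pair hm with h | h <;> omega
    have hk : Gk (F L P) = 5 := by
      rw [Gk, erase3_F, hbody, hsm]; exact count3_shape2 _ 5 hW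
    have hM : GM (F L P) = {L-6, L-6} := by
      rw [GM, erase3_F, hbody, hsm]; exact filter3_shape2 _ 5 hW
    rw [G, hk, hM, if_pos (by omega)]
    rw [if_neg (by rintro ⟨hm, -⟩; rcases mem_pair hm with h | h <;> omega)]
    rw [if_neg (by rintro ⟨hm, -⟩; rcases mem_pair hm with h | h <;> omega)]
    rw [if_neg (by rintro ⟨hm, -⟩; rcases mem_pair hm with h | h <;> omega)]
    rw [if_neg (by rintro ⟨hm, -⟩; rcases mem_pair hm with h | h <;> omega)]
    rw [if_neg (by rintro ⟨hm, -⟩; rcases mem_pair hm with h | h <;> omega)]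
    rw [if_neg (by rintro ⟨hm, -⟩; rcases mem_pair hm with h | h <;> omega)]
    rw [if_neg (by rintro ⟨hm, -⟩; omega)]
    rw [← hcoe, hx3, hyv]
  by_cases hx6 : 6 ≤ x
  · -- p67
    have hsm : small L [x, y] = {x-3, y} := by
      rw [small, if_neg hx3, if_pos hx6]
    by_cases hxe : x = 6
    · have hk : Gk (F L P) = 1 := by
        rw [Gk, erase3_F, hbody, hsm, hxe]
        show Multiset.count 3 {3, y} = 1
        show Multiset.count 3 (3 ::ₘ {y}) = 1
        simp only [Multiset.count_cons, Multiset.count_singleton]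
        split_ifs <;> omega
      rw [G, hk, if_neg (by omega), erase3_F, hbody, hsm, hxe]
      have hs : ({3, y} : Multiset ℕ).sort (· ≤ ·) = [3, y] := by
        rw [← coe_pair]
        exact sort_coe_of_sorted _ (by simp [List.pairwise_cons]; omega)
      show decB (Multiset.sort {6 - 3, y} (· ≤ ·)) = P
      rw [show (6:ℕ) - 3 = 3 from rfl, hs]
      have hd : decB [3, y] = (if (3:ℕ) = 3 then ({6, y} : Multiset ℕ) else {3+3, y}) := rfl
      rw [hd, if_pos rfl, ← hcoe, hxe]
    · have hx7 : 7 ≤ x := by omega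
      have hk : Gk (F L P) = 0 := by
        rw [Gk, erase3_F, hbody, hsm]
        show Multiset.count 3 ((x-3) ::ₘ {y}) = 0
        simp only [Multiset.count_cons, Multiset.count_singleton]
        split_ifs <;> omega
      rw [G, hk, if_neg (by omega), erase3_F, hbody, hsm]
      have hs : ({x-3, y} : Multiset ℕ).sort (· ≤ ·) = [x-3, y] := by
        rw [← coe_pair]
        exact sort_coe_of_sorted _ (by simp [List.pairwise_cons]; omega)
      rw [hs]
      have hd : decB [x-3, y] = (if x-3 = 3 then ({6, y} : Multiset ℕ) else {x-3+3, y}) := rfl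
      rw [hd, if_neg (by omega), ← hcoe]
      have : x - 3 + 3 = x := by omega
      rw [this]
  by_cases hx4 : x = 4
  · -- p4
    have hy17 : 17 ≤ y := by omega
    have hsm : small L [x, y] =
        (if y % 2 = 0 then ({3, 4, (y-6)/2, (y-6)/2} : Multiset ℕ)
         else {3, 5, (y-7)/2, (y-7)/2}) := by
      rw [small, if_neg hx3, if_neg (by omega), if_pos hx4]
    by_cases hpar : y % 2 = 0
    · set z := (y-6)/2 with hz
      have hz6 : 6 ≤ z := by omega
      have hzy : 2*z+6 = y := by omega
      rw [if_pos hpar] at hsm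
      have hk : Gk (F L P) = 1 := by
        rw [Gk, erase3_F, hbody, hsm]
        show Multiset.count 3 (3 ::ₘ 4 ::ₘ z ::ₘ {z}) = 1
        simp only [Multiset.count_cons, Multiset.count_singleton]
        split_ifs <;> omega
      rw [G, hk, if_neg (by omega), erase3_F, hbody, hsm]
      have hs : ({3, 4, z, z} : Multiset ℕ).sort (· ≤ ·) = [3, 4, z, z] := by
        rw [← coe_quad]
        exact sort_coe_of_sorted _ (by simp [List.pairwise_cons]; omega)
      rw [hs]
      have hd : decB [3, 4, z, z] =
          (if z = z then
            if (3:ℕ) = 3 ∧ (4:ℕ) = 4 then ({4, 2*z+6} : Multiset ℕ)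
            else if (3:ℕ) = 3 ∧ (4:ℕ) = 5 then {4, 2*z+7}
            else if (3:ℕ) = 4 ∧ (4:ℕ) = 4 then {5, 2*z+6}
            else if (3:ℕ) = 4 ∧ (4:ℕ) = 5 then {5, 2*z+7}
            else ((inc3 [3,4,z,z] : List ℕ) : Multiset ℕ)
          else ((inc3 [3,4,z,z] : List ℕ) : Multiset ℕ)) := rfl
      rw [hd, if_pos rfl, if_pos ⟨rfl, rfl⟩, hzy, ← hcoe, hx4]
    · set z := (y-7)/2 with hz
      have hz5 : 5 ≤ z := by omega
      have hzy : 2*z+7 = y := by omega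
      rw [if_neg hpar] at hsm
      have hk : Gk (F L P) = 1 := by
        rw [Gk, erase3_F, hbody, hsm]
        show Multiset.count 3 (3 ::ₘ 5 ::ₘ z ::ₘ {z}) = 1
        simp only [Multiset.count_cons, Multiset.count_singleton]
        split_ifs <;> omega
      rw [G, hk, if_neg (by omega), erase3_F, hbody, hsm]
      have hs : ({3, 5, z, z} : Multiset ℕ).sort (· ≤ ·) = [3, 5, z, z] := by
        rw [← coe_quad]
        exact sort_coe_of_sorted _ (by simp [List.pairwise_cons]; omega)
      rw [hs]
      have hd : decB [3, 5, z, z] =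
          (if z = z then
            if (3:ℕ) = 3 ∧ (5:ℕ) = 4 then ({4, 2*z+6} : Multiset ℕ)
            else if (3:ℕ) = 3 ∧ (5:ℕ) = 5 then {4, 2*z+7}
            else if (3:ℕ) = 4 ∧ (5:ℕ) = 4 then {5, 2*z+6}
            else if (3:ℕ) = 4 ∧ (5:ℕ) = 5 then {5, 2*z+7}
            else ((inc3 [3,5,z,z] : List ℕ) : Multiset ℕ)
          else ((inc3 [3,5,z,z] : List ℕ) : Multiset ℕ)) := rfl
      rw [hd, if_pos rfl, if_neg (by rintro ⟨-, h⟩; omega), if_pos ⟨rfl, rfl⟩, hzy, ← hcoe, hx4]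
  · -- p5 : x = 5
    have hx5 : x = 5 := by omega
    have hy16 : 16 ≤ y := by omega
    have hsm : small L [x, y] =
        (if y % 2 = 0 then ({4, 4, (y-6)/2, (y-6)/2} : Multiset ℕ)
         else {4, 5, (y-7)/2, (y-7)/2}) := by
      rw [small, if_neg hx3, if_neg (by omega), if_neg hx4]
    by_cases hpar : y % 2 = 0
    · set z := (y-6)/2 with hz
      have hz5 : 5 ≤ z := by omega
      have hzy : 2*z+6 = y := by omega
      rw [if_pos hpar] at hsm
      have hk : Gk (F L P) = 0 := by
        rw [Gk, erase3_F, hbody, hsm]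
        show Multiset.count 3 (4 ::ₘ 4 ::ₘ z ::ₘ {z}) = 0
        simp only [Multiset.count_cons, Multiset.count_singleton]
        split_ifs <;> omega
      rw [G, hk, if_neg (by omega), erase3_F, hbody, hsm]
      have hs : ({4, 4, z, z} : Multiset ℕ).sort (· ≤ ·) = [4, 4, z, z] := by
        rw [← coe_quad]
        exact sort_coe_of_sorted _ (by simp [List.pairwise_cons]; omega)
      rw [hs]
      have hd : decB [4, 4, z, z] =
          (if z = z then
            if (4:ℕ) = 3 ∧ (4:ℕ) = 4 then ({4, 2*z+6} : Multiset ℕ)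
            else if (4:ℕ) = 3 ∧ (4:ℕ) = 5 then {4, 2*z+7}
            else if (4:ℕ) = 4 ∧ (4:ℕ) = 4 then {5, 2*z+6}
            else if (4:ℕ) = 4 ∧ (4:ℕ) = 5 then {5, 2*z+7}
            else ((inc3 [4,4,z,z] : List ℕ) : Multiset ℕ)
          else ((inc3 [4,4,z,z] : List ℕ) : Multiset ℕ)) := rfl
      rw [hd, if_pos rfl, if_neg (by rintro ⟨h, -⟩; omega),
        if_neg (by rintro ⟨h, -⟩; omega), if_pos ⟨rfl, rfl⟩, hzy, ← hcoe, hx5]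
    · set z := (y-7)/2 with hz
      have hz5 : 5 ≤ z := by omega
      have hzy : 2*z+7 = y := by omega
      rw [if_neg hpar] at hsm
      have hk : Gk (F L P) = 0 := by
        rw [Gk, erase3_F, hbody, hsm]
        show Multiset.count 3 (4 ::ₘ 5 ::ₘ z ::ₘ {z}) = 0
        simp only [Multiset.count_cons, Multiset.count_singleton]
        split_ifs <;> omega
      rw [G, hk, if_neg (by omega), erase3_F, hbody, hsm]
      have hs : ({4, 5, z, z} : Multiset ℕ).sort (· ≤ ·) = [4, 5, z, z] := by
        rw [← coe_quad]
        exact sort_coe_of_sorted _ (by simp [List.pairwise_cons]; omega)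
      rw [hs]
      have hd : decB [4, 5, z, z] =
          (if z = z then
            if (4:ℕ) = 3 ∧ (5:ℕ) = 4 then ({4, 2*z+6} : Multiset ℕ)
            else if (4:ℕ) = 3 ∧ (5:ℕ) = 5 then {4, 2*z+7}
            else if (4:ℕ) = 4 ∧ (5:ℕ) = 4 then {5, 2*z+6}
            else if (4:ℕ) = 4 ∧ (5:ℕ) = 5 then {5, 2*z+7}
            else ((inc3 [4,5,z,z] : List ℕ) : Multiset ℕ)
          else ((inc3 [4,5,z,z] : List ℕ) : Multiset ℕ)) := rfl
      rw [hd, if_pos rfl, if_neg (by rintro ⟨h, -⟩; omega),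
        if_neg (by rintro ⟨h, -⟩; omega), if_neg (by rintro ⟨-, h⟩; omega),
        if_pos ⟨rfl, rfl⟩, hzy, ← hcoe, hx5]


theorem GF {L N : ℕ} (hL : 22 ≤ L) (hN : 21 ≤ N) (P : Multiset ℕ)
    (hsum : P.sum = N) (hP : ∀ j ∈ P, 4 ≤ j ∧ j ≤ L+3) (hne : P ≠ 0) :
    G L (F L P) = P := by
  by_cases h1 : 1 ≤ P.count L
  · exact GF_t hL P hP h1
  by_cases h2 : L+1 ∈ P
  · exact GF_u hL P hP h1 h2
  by_cases h3 : 3 ≤ Multiset.card P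
  · exact GF_I hL P hP h1 h2 h3
  · exact GF_s hL hN P hsum hP h1 h2 h3 hne

theorem F_valid {L N : ℕ} (hL : 22 ≤ L) (hN : 21 ≤ N) (P : Multiset ℕ)
    (hsum : P.sum = N) (hP : ∀ j ∈ P, 4 ≤ j ∧ j ≤ L+3) (hne : P ≠ 0) :
    (F L P).sum = N ∧ (∀ j ∈ F L P, 3 ≤ j ∧ j ≤ L+3 ∧ j ≠ L) := by
  have hsum3 : (F L P).sum = 3 + (body L P).sum := by rw [F, Multiset.sum_cons]
  have hmem3 : ∀ j ∈ F L P, j = 3 ∨ j ∈ body L P := by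
    intro j hj; exact Multiset.mem_cons.1 hj
  by_cases h1 : 1 ≤ P.count L
  · -- t branch
    set t := P.count L with ht
    set V := t * L with hV
    have htL : L ≤ V := by
      have h := Nat.mul_le_mul_right L h1
      rw [one_mul] at h; rw [hV]; exact h
    have hV22 : 22 ≤ V := le_trans hL htL
    have hspec : 3 * yV V + 3 + rhoV V = V := rhoV_spec V hV22
    have hρ : 4 ≤ rhoV V ∧ rhoV V ≤ 6 := rhoV_ge V
    have hbody : body L P = P.filter (· ≠ L) + replicate (yV V) 3 + {rhoV V} := by
      rw [body, if_pos h1]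
    have hQsum : (P.filter (· ≠ L)).sum + t * L = N := by
      have hgg := congrArg Multiset.sum (filter_ne_add_replicate P L)
      rw [Multiset.sum_add, Multiset.sum_replicate, smul_eq_mul] at hgg
      rw [← ht] at hgg; rw [← hgg] at hsum; omega
    constructor
    · rw [hsum3, hbody, Multiset.sum_add, Multiset.sum_add, Multiset.sum_replicate,
        smul_eq_mul, Multiset.sum_singleton]
      omega
    · intro j hj
      rcases hmem3 j hj with h | h
      · omega
      rw [hbody] at h
      rcases Multiset.mem_add.1 h with h | h
      · rcases Multiset.mem_add.1 h with h | h
        · have hj2 := Multiset.mem_filter.1 h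
          have := hP j hj2.1
          have : j ≠ L := by simpa using hj2.2
          omega
        · have := Multiset.eq_of_mem_replicate h
          omega
      · rw [Multiset.mem_singleton] at h
        omega
  by_cases h2 : L+1 ∈ P
  · -- u branch
    have hspec : 3 * yU L + 3 + rhoU L = L + 1 := rhoU_spec L hL
    have hρ : 8 ≤ rhoU L ∧ rhoU L ≤ 10 := rhoU_ge L
    have hbody : body L P = P.erase (L+1) + replicate (yU L) 3 + {rhoU L} := by
      rw [body, if_neg h1, if_pos h2]
    have hQsum : (P.erase (L+1)).sum + (L+1) = N := by
      have hgg := congrArg Multiset.sum (Multiset.cons_erase h2)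
      rw [Multiset.sum_cons] at hgg
      omega
    have hLni : L ∉ P := fun h => h1 (Multiset.one_le_count_iff_mem.2 h)
    constructor
    · rw [hsum3, hbody, Multiset.sum_add, Multiset.sum_add, Multiset.sum_replicate,
        smul_eq_mul, Multiset.sum_singleton]
      omega
    · intro j hj
      rcases hmem3 j hj with h | h
      · omega
      rw [hbody] at h
      rcases Multiset.mem_add.1 h with h | h
      · rcases Multiset.mem_add.1 h with h | h
        · have hjP := Multiset.mem_of_mem_erase h
          have := hP j hjP
          have : j ≠ L := fun he => hLni (he ▸ hjP)
          omega
        · have := Multiset.eq_of_mem_replicate h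
          omega
      · rw [Multiset.mem_singleton] at h
        omega
  by_cases h3 : 3 ≤ Multiset.card P
  · -- I branch
    have hcoe : ((P.sort (· ≤ ·) : List ℕ) : Multiset ℕ) = P := Multiset.sort_eq _ _
    have hlen : (P.sort (· ≤ ·)).length = Multiset.card P := Multiset.length_sort _
    have hbody : body L P = ((dec3 (P.sort (· ≤ ·)) : List ℕ) : Multiset ℕ) := by
      rw [body, if_neg h1, if_neg h2, if_pos h3]
    have hLni : L ∉ P := fun h => h1 (Multiset.one_le_count_iff_mem.2 h)
    have h4 : ∀ x ∈ (P.sort (· ≤ ·)), 4 ≤ x ∧ x ≤ L + 3 ∧ x ≠ L ∧ x ≠ L + 1 := by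
      intro x hx
      have hxP : x ∈ P := by rw [← hcoe]; exact_mod_cast hx
      have := hP x hxP
      exact ⟨this.1, this.2, fun he => hLni (he ▸ hxP), fun he => h2 (he ▸ hxP)⟩
    rcases hℓ : P.sort (· ≤ ·) with - | ⟨a, l1⟩
    · rw [hℓ] at hlen; simp at hlen; omega
    rcases l1 with - | ⟨b, l2⟩
    · rw [hℓ] at hlen; simp at hlen; omega
    rcases l2 with - | ⟨c, r⟩
    · rw [hℓ] at hlen; simp at hlen; omega
    rw [hℓ] at hcoe hbody h4
    have hsum4 : a + (b + (c + r.sum)) = N := by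
      have : ((a :: b :: c :: r : List ℕ) : Multiset ℕ).sum = N := by rw [hcoe]; exact hsum
      simpa using this
    have ha := h4 a (by simp)
    have hb := h4 b (by simp)
    have hc := h4 c (by simp)
    have hdec : dec3 (a :: b :: c :: r) = (a-1) :: (b-1) :: (c-1) :: r := rfl
    rw [hdec] at hbody
    constructor
    · rw [hsum3, hbody]
      have : ((((a-1) :: (b-1) :: (c-1) :: r : List ℕ)) : Multiset ℕ).sum
          = (a-1) + ((b-1) + ((c-1) + r.sum)) := by simp
      rw [this]
      omega
    · intro j hj
      rcases hmem3 j hj with h | h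
      · omega
      rw [hbody] at h
      have h5 : j ∈ ((a-1) :: (b-1) :: (c-1) :: r : List ℕ) := by exact_mod_cast h
      rcases List.mem_cons.1 h5 with he | h5
      · omega
      rcases List.mem_cons.1 h5 with he | h5
      · omega
      rcases List.mem_cons.1 h5 with he | h5
      · omega
      · have := h4 j (by simp [h5])
        omega
  · -- small branch
    have hcoe : ((P.sort (· ≤ ·) : List ℕ) : Multiset ℕ) = P := Multiset.sort_eq _ _
    have hsorted : List.Pairwise (· ≤ ·) (P.sort (· ≤ ·)) := Multiset.pairwise_sort _ _
    have hlen : (P.sort (· ≤ ·)).length = Multiset.card P := Multiset.length_sort _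
    have hcard1 : 1 ≤ Multiset.card P := by
      rcases Nat.eq_zero_or_pos (Multiset.card P) with h | h
      · exact absurd (Multiset.card_eq_zero.1 h) hne
      · omega
    have hLni : L ∉ P := fun h => h1 (Multiset.one_le_count_iff_mem.2 h)
    have hbody : body L P = small L (P.sort (· ≤ ·)) := by
      rw [body, if_neg h1, if_neg h2, if_neg h3]
    rcases hℓ : P.sort (· ≤ ·) with - | ⟨x, l1⟩
    · rw [hℓ] at hlen; simp at hlen; omega
    rcases l1 with - | ⟨y, l2⟩
    · -- card 1
      rw [hℓ] at hcoe hbody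
      rw [coe_single] at hcoe
      have hxN : x = N := by rw [← hsum, ← hcoe]; simp
      have hx : 4 ≤ x ∧ x ≤ L + 3 := hP x (by rw [← hcoe]; simp)
      have hxL : x ≠ L := fun he => hLni (by rw [← hcoe, he]; simp)
      have hxL1 : x ≠ L+1 := fun he => h2 (by rw [← hcoe, ← he]; simp)
      by_cases hx3 : x = L + 3
      · have hsm : small L [x] = replicate 4 3 + {L-12} := by rw [small, if_pos hx3]
        constructor
        · rw [hsum3, hbody, hsm, Multiset.sum_add, Multiset.sum_replicate, smul_eq_mul,
            Multiset.sum_singleton]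
          omega
        · intro j hj
          rcases hmem3 j hj with h | h
          · omega
          rw [hbody, hsm] at h
          rcases Multiset.mem_add.1 h with h | h
          · have := Multiset.eq_of_mem_replicate h; omega
          · rw [Multiset.mem_singleton] at h; omega
      · have hsm : small L [x] = {x-3} := by rw [small, if_neg hx3]
        constructor
        · rw [hsum3, hbody, hsm, Multiset.sum_singleton]; omega
        · intro j hj
          rcases hmem3 j hj with h | h
          · omega
          rw [hbody, hsm, Multiset.mem_singleton] at h
          omega
    rcases l2 with - | ⟨w, l3⟩
    swap
    · rw [hℓ] at hlen; simp at hlen; omega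
    -- card 2
    rw [hℓ] at hcoe hbody hsorted
    rw [coe_pair] at hcoe
    have hxy : x ≤ y := by
      rw [List.pairwise_cons] at hsorted
      exact hsorted.1 y (by simp)
    have hx : 4 ≤ x ∧ x ≤ L + 3 := hP x (by rw [← hcoe]; simp)
    have hy : 4 ≤ y ∧ y ≤ L + 3 := hP y (by rw [← hcoe]; simp)
    have hsum2 : x + y = N := by rw [← hsum, ← hcoe]; simp
    have hyL : y ≠ L := by
      intro he; apply hLni; rw [← hcoe, he]
      exact Multiset.mem_cons.2 (Or.inr (Multiset.mem_singleton_self _))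
    have hxL : x ≠ L := by
      intro he; apply hLni; rw [← hcoe, he]; simp
    by_cases hx3 : x = L + 3
    · have hyv : y = L + 3 := by omega
      have hsm : small L [x, y] = replicate 5 3 + {L-6, L-6} := by rw [small, if_pos hx3]
      constructor
      · rw [hsum3, hbody, hsm, Multiset.sum_add, Multiset.sum_replicate, smul_eq_mul]
        have : ({L-6, L-6} : Multiset ℕ).sum = (L-6) + (L-6) := by simp
        rw [this]; omega
      · intro j hj
        rcases hmem3 j hj with h | h
        · omega
        rw [hbody, hsm] at h
        rcases Multiset.mem_add.1 h with h | h
        · have := Multiset.eq_of_mem_replicate h; omega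
        · rcases mem_pair h with h | h <;> omega
    by_cases hx6 : 6 ≤ x
    · have hsm : small L [x, y] = {x-3, y} := by rw [small, if_neg hx3, if_pos hx6]
      constructor
      · rw [hsum3, hbody, hsm]
        have : ({x-3, y} : Multiset ℕ).sum = (x-3) + y := by simp
        rw [this]; omega
      · intro j hj
        rcases hmem3 j hj with h | h
        · omega
        rw [hbody, hsm] at h
        rcases mem_pair h with h | h <;> omega
    by_cases hx4 : x = 4
    · have hy17 : 17 ≤ y := by omega
      have hsm : small L [x, y] =
          (if y % 2 = 0 then ({3, 4, (y-6)/2, (y-6)/2} : Multiset ℕ)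
           else {3, 5, (y-7)/2, (y-7)/2}) := by
        rw [small, if_neg hx3, if_neg (by omega), if_pos hx4]
      by_cases hpar : y % 2 = 0
      · rw [if_pos hpar] at hsm
        constructor
        · rw [hsum3, hbody, hsm]
          have : ({3, 4, (y-6)/2, (y-6)/2} : Multiset ℕ).sum = 3+4+(y-6)/2+(y-6)/2 := by
            simp; ring
          rw [this]; omega
        · intro j hj
          rcases hmem3 j hj with h | h
          · omega
          rw [hbody, hsm] at h
          simp only [Multiset.insert_eq_cons, Multiset.mem_cons, Multiset.mem_singleton] at h
          rcases h with h | h | h | h <;> omega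
      · rw [if_neg hpar] at hsm
        constructor
        · rw [hsum3, hbody, hsm]
          have : ({3, 5, (y-7)/2, (y-7)/2} : Multiset ℕ).sum = 3+5+(y-7)/2+(y-7)/2 := by
            simp; ring
          rw [this]; omega
        · intro j hj
          rcases hmem3 j hj with h | h
          · omega
          rw [hbody, hsm] at h
          simp only [Multiset.insert_eq_cons, Multiset.mem_cons, Multiset.mem_singleton] at h
          rcases h with h | h | h | h <;> omega
    · have hx5 : x = 5 := by omega
      have hy16 : 16 ≤ y := by omega
      have hsm : small L [x, y] =
          (if y % 2 = 0 then ({4, 4, (y-6)/2, (y-6)/2} : Multiset ℕ)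
           else {4, 5, (y-7)/2, (y-7)/2}) := by
        rw [small, if_neg hx3, if_neg (by omega), if_neg hx4]
      by_cases hpar : y % 2 = 0
      · rw [if_pos hpar] at hsm
        constructor
        · rw [hsum3, hbody, hsm]
          have : ({4, 4, (y-6)/2, (y-6)/2} : Multiset ℕ).sum = 4+4+(y-6)/2+(y-6)/2 := by
            simp; ring
          rw [this]; omega
        · intro j hj
          rcases hmem3 j hj with h | h
          · omega
          rw [hbody, hsm] at h
          simp only [Multiset.insert_eq_cons, Multiset.mem_cons, Multiset.mem_singleton] at h
          rcases h with h | h | h | h <;> omega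
      · rw [if_neg hpar] at hsm
        constructor
        · rw [hsum3, hbody, hsm]
          have : ({4, 5, (y-7)/2, (y-7)/2} : Multiset ℕ).sum = 4+5+(y-7)/2+(y-7)/2 := by
            simp; ring
          rw [this]; omega
        · intro j hj
          rcases hmem3 j hj with h | h
          · omega
          rw [hbody, hsm] at h
          simp only [Multiset.insert_eq_cons, Multiset.mem_cons, Multiset.mem_singleton] at h
          rcases h with h | h | h | h <;> omega


lemma erase3_rep (y : ℕ) (W : Multiset ℕ) (hy : 1 ≤ y) :
    (replicate y 3 + W).erase 3 = replicate (y-1) 3 + W := by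
  rcases y with - | n
  · omega
  · rw [Multiset.replicate_succ, Multiset.cons_add, Multiset.erase_cons_head]
    simp

lemma Ex_props {L N : ℕ} (hL : 22 ≤ L) (hN : 21 ≤ N) :
    (Ex L N).sum = N ∧ (∀ j ∈ Ex L N, j = 3 ∨ j = 4 ∨ j = 7 ∨ j = 8) ∧ 3 ∈ Ex L N := by
  rw [Ex]
  split_ifs with e0 e1 eN1 eN2
  · refine ⟨?_, ?_, ?_⟩
    · rw [Multiset.sum_replicate, smul_eq_mul]; omega
    · intro j hj; have := Multiset.eq_of_mem_replicate hj; omega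
    · exact Multiset.mem_replicate.2 ⟨by omega, rfl⟩
  · refine ⟨?_, ?_, ?_⟩
    · rw [Multiset.sum_add, Multiset.sum_replicate, smul_eq_mul, Multiset.sum_singleton]; omega
    · intro j hj
      rcases Multiset.mem_add.1 hj with h | h
      · have := Multiset.eq_of_mem_replicate h; omega
      · rw [Multiset.mem_singleton] at h; omega
    · exact Multiset.mem_add.1 (by exact Multiset.mem_add.2 (Or.inl (Multiset.mem_replicate.2 ⟨by omega, rfl⟩))) |>.elim (fun h => Multiset.mem_add.2 (Or.inl h)) (fun h => Multiset.mem_add.2 (Or.inr h))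
  · refine ⟨?_, ?_, ?_⟩
    · rw [Multiset.sum_add, Multiset.sum_replicate, smul_eq_mul, Multiset.sum_singleton]; omega
    · intro j hj
      rcases Multiset.mem_add.1 hj with h | h
      · have := Multiset.eq_of_mem_replicate h; omega
      · rw [Multiset.mem_singleton] at h; omega
    · exact Multiset.mem_add.2 (Or.inl (Multiset.mem_replicate.2 ⟨by omega, rfl⟩))
  · refine ⟨?_, ?_, ?_⟩
    · rw [Multiset.sum_add, Multiset.sum_replicate, smul_eq_mul]
      have : ({4, 4} : Multiset ℕ).sum = 8 := by simp
      rw [this]; omega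
    · intro j hj
      rcases Multiset.mem_add.1 hj with h | h
      · have := Multiset.eq_of_mem_replicate h; omega
      · rcases mem_pair h with h | h <;> omega
    · exact Multiset.mem_add.2 (Or.inl (Multiset.mem_replicate.2 ⟨by omega, rfl⟩))
  · refine ⟨?_, ?_, ?_⟩
    · rw [Multiset.sum_add, Multiset.sum_replicate, smul_eq_mul, Multiset.sum_singleton]; omega
    · intro j hj
      rcases Multiset.mem_add.1 hj with h | h
      · have := Multiset.eq_of_mem_replicate h; omega
      · rw [Multiset.mem_singleton] at h; omega
    · exact Multiset.mem_add.2 (Or.inl (Multiset.mem_replicate.2 ⟨by omega, rfl⟩))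

lemma G_Ex {L N : ℕ} (hL : 22 ≤ L) (hN : 21 ≤ N) : G L (Ex L N) = {L+3, L+3} := by
  rw [Ex]
  split_ifs with e0 e1 eN1 eN2
  · -- N ≡ 0 : pure threes
    have h30 : (3:ℕ) ∉ (0 : Multiset ℕ) := Multiset.notMem_zero 3
    have he : (replicate (N/3) 3).erase 3 = replicate (N/3-1) 3 + 0 := by
      rw [← add_zero (replicate (N/3) 3), erase3_rep _ _ (by omega)]
    have hk : Gk (replicate (N/3) 3) = N/3 - 1 := by
      rw [Gk, he]; exact count3_shape2 _ _ h30
    have hM : GM (replicate (N/3) 3) = 0 := by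
      rw [GM, he]; exact filter3_shape2 _ _ h30
    rw [G, hk, hM, if_pos (by omega)]
    rw [if_neg (by rintro ⟨hm, -⟩; exact Multiset.notMem_zero _ hm)]
    rw [if_neg (by rintro ⟨hm, -⟩; exact Multiset.notMem_zero _ hm)]
    rw [if_neg (by rintro ⟨hm, -⟩; exact Multiset.notMem_zero _ hm)]
    rw [if_neg (by rintro ⟨hm, -⟩; exact Multiset.notMem_zero _ hm)]
    rw [if_neg (by rintro ⟨hm, -⟩; exact Multiset.notMem_zero _ hm)]
    rw [if_neg (by rintro ⟨hm, -⟩; exact Multiset.notMem_zero _ hm)]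
    rw [if_neg (by rintro ⟨-, hm⟩; exact Multiset.singleton_ne_zero _ hm.symm)]
  · -- N ≡ 1, N = L+1 : marker {4}
    have hW : (3:ℕ) ∉ ({4} : Multiset ℕ) := by rw [Multiset.mem_singleton]; omega
    have he : (replicate ((N-4)/3) 3 + {4}).erase 3 = replicate ((N-4)/3-1) 3 + {4} :=
      erase3_rep _ _ (by omega)
    have hk : Gk (replicate ((N-4)/3) 3 + {4}) = (N-4)/3 - 1 := by
      rw [Gk, he]; exact count3_shape2 _ _ hW
    have hM : GM (replicate ((N-4)/3) 3 + {4}) = {4} := by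
      rw [GM, he]; exact filter3_shape2 _ _ hW
    have hkval : 3 * ((N-4)/3 - 1) = N - 7 := by omega
    rw [G, hk, hM, if_pos (by omega)]
    rw [if_neg (by rintro ⟨hm, -⟩; rw [Multiset.mem_singleton] at hm; omega)]
    rw [if_neg (by rintro ⟨hm, -⟩; rw [Multiset.mem_singleton] at hm; omega)]
    rw [if_neg (by rintro ⟨hm, -⟩; rw [Multiset.mem_singleton] at hm; omega)]
    rw [if_neg (by
      rintro ⟨-, hmod, -⟩
      have hv : 3 * ((N-4)/3 - 1) + 7 = L + 1 := by omega
      rw [hv, Nat.add_mod_left] at hmod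
      rw [Nat.mod_eq_of_lt (by omega)] at hmod
      omega)]
    rw [if_neg (by rintro ⟨hm, -⟩; rw [Multiset.mem_singleton] at hm; omega)]
    rw [if_neg (by rintro ⟨hm, -⟩; rw [Multiset.mem_singleton] at hm; omega)]
    rw [if_neg (by rintro ⟨-, hm⟩; rw [Multiset.singleton_inj] at hm; omega)]
  · -- N ≡ 1, N ≠ L+1 : marker {7}
    have hW : (3:ℕ) ∉ ({7} : Multiset ℕ) := by rw [Multiset.mem_singleton]; omega
    have he : (replicate ((N-7)/3) 3 + {7}).erase 3 = replicate ((N-7)/3-1) 3 + {7} :=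
      erase3_rep _ _ (by omega)
    have hk : Gk (replicate ((N-7)/3) 3 + {7}) = (N-7)/3 - 1 := by
      rw [Gk, he]; exact count3_shape2 _ _ hW
    have hM : GM (replicate ((N-7)/3) 3 + {7}) = {7} := by
      rw [GM, he]; exact filter3_shape2 _ _ hW
    rw [G, hk, hM, if_pos (by omega)]
    rw [if_neg (by rintro ⟨hm, -⟩; rw [Multiset.mem_singleton] at hm; omega)]
    rw [if_neg (by rintro ⟨hm, -⟩; rw [Multiset.mem_singleton] at hm; omega)]
    rw [if_neg (by rintro ⟨hm, -⟩; rw [Multiset.mem_singleton] at hm; omega)]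
    rw [if_neg (by rintro ⟨hm, -⟩; rw [Multiset.mem_singleton] at hm; omega)]
    rw [if_neg (by rintro ⟨hm, -⟩; rw [Multiset.mem_singleton] at hm; omega)]
    rw [if_neg (by rintro ⟨hm, -⟩; rw [Multiset.mem_singleton] at hm; omega)]
    rw [if_neg (by rintro ⟨-, hm⟩; rw [Multiset.singleton_inj] at hm; omega)]
  · -- N ≡ 2, N = L+1 : marker {4,4}
    have hW : (3:ℕ) ∉ ({4, 4} : Multiset ℕ) := by
      intro hm; rcases mem_pair hm with h | h <;> omega
    have he : (replicate ((N-8)/3) 3 + {4,4}).erase 3 = replicate ((N-8)/3-1) 3 + {4,4} :=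
      erase3_rep _ _ (by omega)
    have hk : Gk (replicate ((N-8)/3) 3 + {4,4}) = (N-8)/3 - 1 := by
      rw [Gk, he]; exact count3_shape2 _ _ hW
    have hM : GM (replicate ((N-8)/3) 3 + {4,4}) = {4,4} := by
      rw [GM, he]; exact filter3_shape2 _ _ hW
    rw [G, hk, hM, if_pos (by omega)]
    rw [if_neg (by rintro ⟨hm, -⟩; rcases mem_pair hm with h | h <;> omega)]
    rw [if_neg (by rintro ⟨hm, -⟩; rcases mem_pair hm with h | h <;> omega)]
    rw [if_neg (by rintro ⟨hm, -⟩; rcases mem_pair hm with h | h <;> omega)]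
    rw [if_neg (by
      rintro ⟨-, hmod, -⟩
      have hv : 3 * ((N-8)/3 - 1) + 7 = L - 3 := by omega
      rw [hv, Nat.mod_eq_of_lt (by omega)] at hmod
      omega)]
    rw [if_neg (by rintro ⟨hm, -⟩; rcases mem_pair hm with h | h <;> omega)]
    rw [if_neg (by rintro ⟨hm, -⟩; rcases mem_pair hm with h | h <;> omega)]
    rw [if_neg (by
      rintro ⟨-, hm⟩
      have := congrArg Multiset.card hm
      simp at this)]
  · -- N ≡ 2, N ≠ L+1 : marker {8}
    have hW : (3:ℕ) ∉ ({8} : Multiset ℕ) := by rw [Multiset.mem_singleton]; omega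
    have he : (replicate ((N-8)/3) 3 + {8}).erase 3 = replicate ((N-8)/3-1) 3 + {8} :=
      erase3_rep _ _ (by omega)
    have hk : Gk (replicate ((N-8)/3) 3 + {8}) = (N-8)/3 - 1 := by
      rw [Gk, he]; exact count3_shape2 _ _ hW
    have hM : GM (replicate ((N-8)/3) 3 + {8}) = {8} := by
      rw [GM, he]; exact filter3_shape2 _ _ hW
    rw [G, hk, hM, if_pos (by omega)]
    rw [if_neg (by
      rintro ⟨-, hv⟩
      have : 3 * ((N-8)/3 - 1) + 11 = N := by omega
      omega)]
    rw [if_neg (by rintro ⟨hm, -⟩; rw [Multiset.mem_singleton] at hm; omega)]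
    rw [if_neg (by rintro ⟨hm, -⟩; rw [Multiset.mem_singleton] at hm; omega)]
    rw [if_neg (by rintro ⟨hm, -⟩; rw [Multiset.mem_singleton] at hm; omega)]
    rw [if_neg (by rintro ⟨hm, -⟩; rw [Multiset.mem_singleton] at hm; omega)]
    rw [if_neg (by rintro ⟨hm, -⟩; rw [Multiset.mem_singleton] at hm; omega)]
    rw [if_neg (by rintro ⟨-, hm⟩; rw [Multiset.singleton_inj] at hm; omega)]

lemma F_dd {L : ℕ} (hL : 22 ≤ L) :
    F L ({L+3, L+3} : Multiset ℕ) = 3 ::ₘ (replicate 5 3 + {L-6, L-6}) := by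
  have hc : Multiset.count L ({L+3, L+3} : Multiset ℕ) = 0 := by
    rw [Multiset.count_eq_zero]
    intro hm; rcases mem_pair hm with h | h <;> omega
  have hm1 : L + 1 ∉ ({L+3, L+3} : Multiset ℕ) := by
    intro hm; rcases mem_pair hm with h | h <;> omega
  have hcard : ¬ 3 ≤ Multiset.card ({L+3, L+3} : Multiset ℕ) := by
    simp
  have hs : ({L+3, L+3} : Multiset ℕ).sort (· ≤ ·) = [L+3, L+3] := by
    rw [← coe_pair]
    exact sort_coe_of_sorted _ (by simp [List.pairwise_cons])
  rw [F, body, if_neg (by omega), if_neg hm1, if_neg hcard, hs]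
  rw [small, if_pos rfl]

lemma Ex_not_range {L N : ℕ} (hL : 22 ≤ L) (hN : 21 ≤ N) (P : Multiset ℕ)
    (hsum : P.sum = N) (hP : ∀ j ∈ P, 4 ≤ j ∧ j ≤ L+3) (hne : P ≠ 0) :
    F L P ≠ Ex L N := by
  intro heq
  have h1 : P = {L+3, L+3} := by
    rw [← GF hL hN P hsum hP hne, heq, G_Ex hL hN]
  have h2 : F L P = 3 ::ₘ (replicate 5 3 + {L-6, L-6}) := by
    rw [h1]; exact F_dd hL
  have h3 : (L-6) ∈ F L P := by
    rw [h2]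
    refine Multiset.mem_cons.2 (Or.inr ?_)
    exact Multiset.mem_add.2 (Or.inr (Multiset.mem_cons.2 (Or.inl rfl)))
  rw [heq] at h3
  have h4 := (Ex_props hL hN).2.1 (L-6) h3
  omega


lemma partition_ext {N : ℕ} (p q : Nat.Partition N) (h : p.parts = q.parts) : p = q := by
  cases p; cases q; simpa using h

end Stmt16

theorem stmt_16 (L N : ℕ) (hL : 22 ≤ L) (hN : 21 ≤ N) :
    Nat.card {p : Nat.Partition N //
        p.parts ≠ 0 ∧ ∀ j ∈ p.parts, 4 ≤ j ∧ j ≤ L + 3} <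
      Nat.card {p : Nat.Partition N //
        3 ∈ p.parts ∧ (∀ j ∈ p.parts, 3 ≤ j ∧ j ≤ L + 3) ∧ L ∉ p.parts} := by
  classical
  have hval : ∀ q : {p : Nat.Partition N //
      p.parts ≠ 0 ∧ ∀ j ∈ p.parts, 4 ≤ j ∧ j ≤ L + 3},
      (Stmt16.F L q.1.parts).sum = N ∧ (∀ j ∈ Stmt16.F L q.1.parts, 3 ≤ j ∧ j ≤ L+3 ∧ j ≠ L) :=
    fun q => Stmt16.F_valid hL hN q.1.parts q.1.parts_sum q.2.2 q.2.1
  let f : {p : Nat.Partition N // p.parts ≠ 0 ∧ ∀ j ∈ p.parts, 4 ≤ j ∧ j ≤ L + 3} →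
      {p : Nat.Partition N // 3 ∈ p.parts ∧ (∀ j ∈ p.parts, 3 ≤ j ∧ j ≤ L + 3) ∧ L ∉ p.parts} :=
    fun q =>
      ⟨⟨Stmt16.F L q.1.parts,
        fun {i} hi => by have := (hval q).2 i hi; omega,
        (hval q).1⟩,
       by show 3 ∈ Stmt16.F L q.1.parts; rw [Stmt16.F]; exact Multiset.mem_cons_self 3 _,
       fun j hj => ⟨((hval q).2 j hj).1, ((hval q).2 j hj).2.1⟩,
       fun h => ((hval q).2 L h).2.2 rfl⟩
  have hinj : Function.Injective f := by
    intro q1 q2 h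
    have hparts : Stmt16.F L q1.1.parts = Stmt16.F L q2.1.parts := congrArg (fun x => x.1.parts) h
    have heq : q1.1.parts = q2.1.parts := by
      rw [← Stmt16.GF hL hN q1.1.parts q1.1.parts_sum q1.2.2 q1.2.1,
          ← Stmt16.GF hL hN q2.1.parts q2.1.parts_sum q2.2.2 q2.2.1, hparts]
    exact Subtype.ext (Stmt16.partition_ext _ _ heq)
  have hEx := Stmt16.Ex_props (L := L) (N := N) hL hN
  let b0 : {p : Nat.Partition N // 3 ∈ p.parts ∧ (∀ j ∈ p.parts, 3 ≤ j ∧ j ≤ L + 3) ∧ L ∉ p.parts} :=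
    ⟨⟨Stmt16.Ex L N,
      fun {i} hi => by have := hEx.2.1 i hi; omega,
      hEx.1⟩,
     hEx.2.2,
     fun j hj => by have := hEx.2.1 j hj; omega,
     fun h => by have := hEx.2.1 L h; omega⟩
  have hb0 : b0 ∉ Set.range f := by
    rintro ⟨q, hq⟩
    have heq : Stmt16.F L q.1.parts = Stmt16.Ex L N := congrArg (fun x => x.1.parts) hq
    exact Stmt16.Ex_not_range hL hN q.1.parts q.1.parts_sum q.2.2 q.2.1 heq
  rw [Nat.card_eq_fintype_card, Nat.card_eq_fintype_card]
  exact Fintype.card_lt_of_injective_of_notMem f hinj hb0
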